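/- arXiv:math/0303240 — 4 statements merged into one kernel-verified Lean document; each statement's English description precedes it below -/
import Mathlib

section
/- Let d be an even positive integer and ζ a primitive d-th root of unity in ℂ. Let l' divide d with l = d/l' odd and l' even, and S = {l·s : 0 ≤ s < l'}. If l' ∣ a and l' ∣ b, then ∑_{j,j' ∈ S} ζ^(ja + j'b) (-1)^(jj') = l'^2 / 2. -/
theorem stmt_2 (d l' : ℕ) (hd : 0 < d) (hde : Even d) (hl' : 0 < l') (hl'e : Even l')
    (hdvd : l' ∣ d) (hlodd : Odd (d / l'))
    (ζ : ℂ) (hζ : IsPrimitiveRoot ζ d) (a b : ℤ)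
    (ha : (l' : ℤ) ∣ a) (hb : (l' : ℤ) ∣ b) :
    ∑ s ∈ Finset.range l', ∑ s' ∈ Finset.range l',
      ζ ^ (((d / l' * s : ℕ) : ℤ) * a + ((d / l' * s' : ℕ) : ℤ) * b) *
        (-1 : ℂ) ^ ((d / l' * s) * (d / l' * s')) = (l' : ℂ) ^ 2 / 2 := by
  have hζ0 : ζ ≠ 0 := hζ.ne_zero hd.ne'
  set l : ℕ := d / l' with hldef
  have hll' : l * l' = d := Nat.div_mul_cancel hdvd
  obtain ⟨c, hc⟩ := ha
  obtain ⟨e, he⟩ := hb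
  have h1 : ∀ (x : ℤ) (s : ℕ), ζ ^ (((l * s : ℕ) : ℤ) * ((l' : ℤ) * x)) = 1 := by
    intro x s
    rw [hζ.zpow_eq_one_iff_dvd]
    refine ⟨s * x, ?_⟩
    have : ((l : ℕ) : ℤ) * (l' : ℤ) = (d : ℤ) := by exact_mod_cast congrArg (Nat.cast : ℕ → ℤ) hll'
    push_cast
    rw [← this]
    ring
  have hln : ¬ Even l := Nat.not_even_iff_odd.mpr hlodd
  have hstep : ∀ s s' : ℕ,
      ζ ^ (((l * s : ℕ) : ℤ) * a + ((l * s' : ℕ) : ℤ) * b) *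
        (-1 : ℂ) ^ ((l * s) * (l * s')) = ((-1 : ℂ) ^ s) ^ s' := by
    intro s s'
    rw [zpow_add₀ hζ0, hc, h1, he, h1, one_mul, one_mul, ← pow_mul]
    have hpar : Even ((l * s) * (l * s')) ↔ Even (s * s') := by
      rw [Nat.even_mul, Nat.even_mul, Nat.even_mul, Nat.even_mul]
      tauto
    by_cases hs : Even (s * s')
    · rw [(hpar.mpr hs).neg_one_pow, hs.neg_one_pow]
    · rw [(Nat.not_even_iff_odd.mp (fun h => hs (hpar.mp h))).neg_one_pow,
        (Nat.not_even_iff_odd.mp hs).neg_one_pow]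
  calc ∑ s ∈ Finset.range l', ∑ s' ∈ Finset.range l',
        ζ ^ (((l * s : ℕ) : ℤ) * a + ((l * s' : ℕ) : ℤ) * b) *
          (-1 : ℂ) ^ ((l * s) * (l * s'))
      = ∑ s ∈ Finset.range l', ∑ s' ∈ Finset.range l', ((-1 : ℂ) ^ s) ^ s' := by
        exact Finset.sum_congr rfl fun s _ => Finset.sum_congr rfl fun s' _ => hstep s s'
    _ = ∑ s ∈ Finset.range l', ((l' : ℂ) / 2) * (1 + (-1 : ℂ) ^ s) := by
        refine Finset.sum_congr rfl fun s _ => ?_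
        by_cases hs : Even s
        · rw [hs.neg_one_pow]
          simp
          ring
        · rw [(Nat.not_even_iff_odd.mp hs).neg_one_pow]
          have : ∑ s' ∈ Finset.range l', ((-1 : ℂ)) ^ s' = 0 := by rw [neg_one_geom_sum]; simp [hl'e]
          rw [this]
          ring
    _ = (l' : ℂ) ^ 2 / 2 := by
        rw [← Finset.mul_sum, Finset.sum_add_distrib, Finset.sum_const, neg_one_geom_sum, if_pos hl'e]
        simp
        ring
end

section
/- Let d be an even positive integer and ζ a primitive d-th root of unity in ℂ. Let l' divide d with l = d/l' odd and l' even, and S = {l·s : 0 ≤ s < l'}. If a ≡ b ≡ l'/2 (mod l'), then ∑_{j,j' ∈ S} ζ^(ja + j'b) (-1)^(jj') = −l'^2 / 2. -/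
private lemma L1 (n : ℕ) : ∑ j ∈ Finset.range (2*n), (-1:ℂ)^j = 0 := by
  induction n with
  | zero => simp
  | succ n ih =>
    have h : 2*(n+1) = (2*n) + 1 + 1 := by ring
    rw [h, Finset.sum_range_succ, Finset.sum_range_succ, ih, pow_succ]
    ring

private lemma L2 (C : ℂ) (n : ℕ) :
    ∑ s ∈ Finset.range (2*n), (if Even s then (0:ℂ) else C) = n * C := by
  induction n with
  | zero => simp
  | succ n ih =>
    have h : 2*(n+1) = (2*n) + 1 + 1 := by ring
    rw [h, Finset.sum_range_succ, Finset.sum_range_succ, ih]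
    have h1 : Even (2*n) := even_two_mul n
    have h2 : ¬ Even (2*n+1) := by simp [Nat.even_add_one, h1]
    rw [if_pos h1, if_neg h2]
    push_cast; ring

theorem stmt_3 (d l' : ℕ) (hd : 0 < d) (hde : Even d) (hl' : 0 < l') (hl'e : Even l')
    (hdvd : l' ∣ d) (hlodd : Odd (d / l'))
    (ζ : ℂ) (hζ : IsPrimitiveRoot ζ d) (a b : ℤ)
    (ha : (l' : ℤ) ∣ (a - (l' / 2 : ℕ))) (hb : (l' : ℤ) ∣ (b - (l' / 2 : ℕ))) :
    ∑ s ∈ Finset.range l', ∑ s' ∈ Finset.range l',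
      ζ ^ (((d / l' * s : ℕ) : ℤ) * a + ((d / l' * s' : ℕ) : ℤ) * b) *
        (-1 : ℂ) ^ ((d / l' * s) * (d / l' * s')) = -((l' : ℂ) ^ 2 / 2) := by
  have hζ0 : ζ ≠ 0 := hζ.ne_zero hd.ne'
  set l := d / l' with hl
  obtain ⟨m, hmm⟩ := hl'e
  have hm2 : l' = 2 * m := by omega
  have hmpos : 0 < m := by omega
  have hdeq : d = l' * l := (Nat.mul_div_cancel' hdvd).symm
  have hlpos : 0 < l := by
    rcases Nat.eq_zero_or_pos l with h | h
    · rw [h, Nat.mul_zero] at hdeq; omega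
    · exact h
  have hdZ : (d:ℤ) = (l':ℤ) * l := by exact_mod_cast hdeq
  have hhalfnat : (l' / 2 : ℕ) = m := by omega
  -- ζ ^ (l*m) = -1
  have hhalf : ζ ^ (l * m) = -1 := by
    have hsq : (ζ ^ (l * m)) * (ζ ^ (l * m)) = 1 := by
      rw [← pow_add]
      have he : l * m + l * m = d := by rw [hdeq, hm2]; ring
      rw [he, hζ.pow_eq_one]
    have hne : ζ ^ (l * m) ≠ 1 := by
      intro h
      have hdvd' := (hζ.pow_eq_one_iff_dvd _).mp h
      have hle : d ≤ l * m := Nat.le_of_dvd (by positivity) hdvd'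
      have hd2 : d = 2 * (l * m) := by rw [hdeq, hm2]; ring
      have : 0 < l * m := by positivity
      omega
    rcases mul_self_eq_one_iff.mp hsq with h | h
    · exact absurd h hne
    · exact h
  -- key: for x ≡ m mod l', ζ^((l*s)*x) = (-1)^s
  have key : ∀ (x : ℤ), (l' : ℤ) ∣ (x - m) → ∀ s : ℕ,
      ζ ^ (((l * s : ℕ) : ℤ) * x) = (-1:ℂ)^s := by
    intro x hx s
    obtain ⟨k, hk⟩ := hx
    have hx' : x = (l':ℤ) * k + m := by linarith
    have hsplit : ((l * s : ℕ) : ℤ) * x = (d:ℤ) * ((s:ℤ)*k) + ((l * m * s : ℕ) : ℤ) := by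
      rw [hx', hdZ]; push_cast; ring
    rw [hsplit, zpow_add₀ hζ0, zpow_mul, zpow_natCast, hζ.pow_eq_one, one_zpow, one_mul,
      zpow_natCast, pow_mul, hhalf]
  -- the sign term
  have sign : ∀ s s' : ℕ, (-1 : ℂ) ^ ((l * s) * (l * s')) = ((-1:ℂ)^s)^s' := by
    intro s s'
    have he : (l * s) * (l * s') = (l * l) * (s * s') := by ring
    rw [he, ← pow_mul]
    rcases Nat.even_or_odd (s * s') with hp | hp
    · rw [Even.neg_one_pow (hp.mul_left _), Even.neg_one_pow hp]
    · rw [Odd.neg_one_pow ((hlodd.mul hlodd).mul hp), Odd.neg_one_pow hp]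
  have hstep : ∀ s ∈ Finset.range l', ∑ s' ∈ Finset.range l',
      ζ ^ (((l * s : ℕ) : ℤ) * a + ((l * s' : ℕ) : ℤ) * b) *
        (-1 : ℂ) ^ ((l * s) * (l * s'))
      = (if Even s then (0:ℂ) else -(l' : ℂ)) := by
    intro s _
    have hterm : ∀ s' ∈ Finset.range l',
        ζ ^ (((l * s : ℕ) : ℤ) * a + ((l * s' : ℕ) : ℤ) * b) *
          (-1 : ℂ) ^ ((l * s) * (l * s'))
        = (-1:ℂ)^s * (((-1:ℂ)^(s+1))^s') := by
      intro s' _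
      rw [zpow_add₀ hζ0, key a (hhalfnat ▸ ha) s, key b (hhalfnat ▸ hb) s', sign]
      rw [show ((-1:ℂ)^(s+1))^s' = ((-1:ℂ)^s')*(((-1:ℂ)^s)^s') by
        rw [← pow_mul, ← pow_mul, ← pow_add]; congr 1; ring]
      ring
    rw [Finset.sum_congr rfl hterm, ← Finset.mul_sum]
    rcases Nat.even_or_odd s with hp | hp
    · rw [if_pos hp]
      have hb1 : (-1:ℂ)^(s+1) = -1 := Odd.neg_one_pow (Even.add_one hp)
      rw [hb1, hm2, L1, mul_zero]
    · rw [if_neg (Nat.not_even_iff_odd.mpr hp)]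
      have hb1 : (-1:ℂ)^(s+1) = 1 := Even.neg_one_pow (Odd.add_one hp)
      have hs1 : (-1:ℂ)^s = -1 := Odd.neg_one_pow hp
      simp [hb1, hs1]
  rw [Finset.sum_congr rfl hstep, hm2, L2]
  have : ((2*m : ℕ) : ℂ) = 2 * m := by push_cast; ring
  rw [this]
  ring
end

section
/- Let d be an even positive integer and ζ a primitive d-th root of unity in ℂ. Let l' divide d with l = d/l' odd and l' even, and S = {l·s : 0 ≤ s < l'}. If a ≡ 0 and b ≡ l'/2 (mod l'), then ∑_{j,j' ∈ S} ζ^(ja + j'b) (-1)^(jj') = l'^2 / 2. -/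
lemma stmt4_aux (c : ℂ) : ∀ m : ℕ,
    ∑ s ∈ Finset.range (2 * m), (if Even s then (0 : ℂ) else c) = m * c := by
  intro m
  induction m with
  | zero => simp
  | succ n ih =>
    rw [Nat.mul_succ, Finset.sum_range_succ, Finset.sum_range_succ, ih]
    have h1 : Even (2 * n) := even_two_mul n
    have h2 : ¬ Even (2 * n + 1) := by simp [Nat.even_add_one, h1]
    rw [if_pos h1, if_neg h2]
    push_cast
    ring

theorem stmt_4 (d l' : ℕ) (hd : 0 < d) (hde : Even d) (hl' : 0 < l') (hl'e : Even l')
    (hdvd : l' ∣ d) (hlodd : Odd (d / l'))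
    (ζ : ℂ) (hζ : IsPrimitiveRoot ζ d) (a b : ℤ)
    (ha : (l' : ℤ) ∣ a) (hb : (l' : ℤ) ∣ (b - (l' / 2 : ℕ))) :
    ∑ s ∈ Finset.range l', ∑ s' ∈ Finset.range l',
      ζ ^ (((d / l' * s : ℕ) : ℤ) * a + ((d / l' * s' : ℕ) : ℤ) * b) *
        (-1 : ℂ) ^ ((d / l' * s) * (d / l' * s')) = (l' : ℂ) ^ 2 / 2 := by
  obtain ⟨k, hk⟩ := ha
  obtain ⟨m, hm⟩ := hb
  obtain ⟨t, ht⟩ := hl'e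
  set l := d / l' with hl
  have hll' : l * l' = d := Nat.div_mul_cancel hdvd
  have hlpos : 0 < l := hlodd.pos
  have htpos : 0 < t := by omega
  have hζ0 : ζ ≠ 0 := hζ.ne_zero hd.ne'
  have hlt2 : l * t * 2 = d := by rw [← hll', ht]; ring
  have hd2 : ζ ^ (l * t) = -1 := by
    have hsq : (ζ ^ (l * t)) ^ 2 = 1 := by
      rw [← pow_mul, hlt2, hζ.pow_eq_one]
    have hne : ζ ^ (l * t) ≠ 1 :=
      hζ.pow_ne_one_of_pos_of_lt (by positivity) (by omega)
    rcases sq_eq_one_iff.mp hsq with h | h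
    · exact absurd h hne
    · exact h
  have ht2 : l' / 2 = t := by omega
  have hbm : b = (t : ℤ) + (l' : ℤ) * m := by
    rw [ht2] at hm; omega
  obtain ⟨v, hv⟩ := hlodd.mul hlodd
  have key : ∀ s s' : ℕ,
      ζ ^ (((l * s : ℕ) : ℤ) * a + ((l * s' : ℕ) : ℤ) * b) *
        (-1 : ℂ) ^ ((l * s) * (l * s')) = ((-1 : ℂ) ^ (s + 1)) ^ s' := by
    intro s s'
    have hdc : (d : ℤ) = (l : ℤ) * (l' : ℤ) := by exact_mod_cast hll'.symm
    have hE : ((l * s : ℕ) : ℤ) * a + ((l * s' : ℕ) : ℤ) * b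
        = ((l * t : ℕ) : ℤ) * (s' : ℤ) + (d : ℤ) * ((s : ℤ) * k + (s' : ℤ) * m) := by
      rw [hk, hbm, hdc]; push_cast; ring
    rw [hE, zpow_add₀ hζ0, zpow_mul, zpow_mul, zpow_natCast ζ (l * t), zpow_natCast ζ d, hd2,
      hζ.pow_eq_one, one_zpow, zpow_natCast, mul_one]
    have hmm : (l * s) * (l * s') = s * s' + (v * (s * s')) * 2 := by
      calc (l * s) * (l * s') = (l * l) * (s * s') := by ring
        _ = (2 * v + 1) * (s * s') := by rw [hv]
        _ = s * s' + (v * (s * s')) * 2 := by ring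
    have heven : Even (v * (s * s') * 2) := ⟨v * (s * s'), by ring⟩
    rw [hmm, pow_add, heven.neg_one_pow, mul_one, ← pow_add, ← pow_mul]
    congr 1
    ring
  calc ∑ s ∈ Finset.range l', ∑ s' ∈ Finset.range l',
      ζ ^ (((l * s : ℕ) : ℤ) * a + ((l * s' : ℕ) : ℤ) * b) *
        (-1 : ℂ) ^ ((l * s) * (l * s'))
      = ∑ s ∈ Finset.range l', ∑ s' ∈ Finset.range l', ((-1 : ℂ) ^ (s + 1)) ^ s' :=
        Finset.sum_congr rfl fun s _ => Finset.sum_congr rfl fun s' _ => key s s'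
    _ = ∑ s ∈ Finset.range l', (if Even s then (0 : ℂ) else (l' : ℂ)) := by
        refine Finset.sum_congr rfl fun s _ => ?_
        rcases Nat.even_or_odd s with he | ho
        · have h1 : (-1 : ℂ) ^ (s + 1) = -1 := (he.add_one).neg_one_pow
          rw [if_pos he]
          simp only [h1]
          rw [neg_one_geom_sum, if_pos (by exact ⟨t, ht⟩)]
        · have h1 : (-1 : ℂ) ^ (s + 1) = 1 := (Odd.add_one ho).neg_one_pow
          rw [if_neg (by simpa [Nat.not_even_iff_odd] using ho)]
          simp [h1]
    _ = (t : ℂ) * (l' : ℂ) := by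
        rw [show l' = 2 * t by omega]
        exact stmt4_aux _ t
    _ = (l' : ℂ) ^ 2 / 2 := by
        have : (l' : ℂ) = 2 * t := by rw [show l' = 2 * t by omega]; push_cast; ring
        rw [this]; ring
end

section
/- Let N ≥ 2, K ≥ 2 and consider the ℤ/N-action on Γ_{N,K} = {λ ∈ ℤ^N : K ≥ λ₁ ≥ ⋯ ≥ λ_{N−1} ≥ λ_N = 0} generated by σ(λ₁,…,λ_{N−1},0) = (K−λ_{N−1}, λ₁−λ_{N−1}, …, λ_{N−2}−λ_{N−1}, 0). The function λ ↦ |λ| mod gcd(N,K), where |λ| = ∑ᵢ λᵢ, is NOT invariant in general, but the function λ ↦ ∏_{1≤i<j≤N} 2 sin((λᵢ − i − λⱼ + j)π/(N+K)) is invariant under σ. -/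
def GammaNK (N K : ℕ) : Set (Fin N → ℤ) :=
  {l | (∀ i j : Fin N, i ≤ j → l j ≤ l i) ∧ (∀ i : Fin N, 0 ≤ l i) ∧
    (∀ i : Fin N, l i ≤ (K : ℤ)) ∧ ∀ i : Fin N, (i : ℕ) = N - 1 → l i = 0}

def sigmaMap (N K : ℕ) (hN : 2 ≤ N) (l : Fin N → ℤ) : Fin N → ℤ :=
  fun i =>
    if (i : ℕ) = N - 1 then 0
    else if (i : ℕ) = 0 then (K : ℤ) - l ⟨N - 2, by omega⟩
    else l ⟨(i : ℕ) - 1, lt_of_le_of_lt (Nat.sub_le _ 1) i.isLt⟩ - l ⟨N - 2, by omega⟩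

def phiP (N : ℕ) (hN : 2 ≤ N) (p : Fin N × Fin N) : Fin N × Fin N :=
  if (p.1 : ℕ) = 0 then
    (⟨(p.2 : ℕ) - 1, by have := p.2.isLt; omega⟩, ⟨N - 1, by omega⟩)
  else
    (⟨(p.1 : ℕ) - 1, by have := p.1.isLt; omega⟩, ⟨(p.2 : ℕ) - 1, by have := p.2.isLt; omega⟩)

def psiP (N : ℕ) (hN : 2 ≤ N) (q : Fin N × Fin N) : Fin N × Fin N :=
  if (q.2 : ℕ) = N - 1 then
    (⟨0, by omega⟩, ⟨min ((q.1 : ℕ) + 1) (N - 1), by omega⟩)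
  else
    (⟨min ((q.1 : ℕ) + 1) (N - 1), by omega⟩, ⟨min ((q.2 : ℕ) + 1) (N - 1), by omega⟩)

lemma refl_sin_aux (N K : ℕ) (hNK : 0 < N + K) (a b : ℤ) (h : a + b = (N : ℤ) + K) :
    2 * Real.sin ((a : ℝ) * Real.pi / ((N : ℝ) + K)) =
      2 * Real.sin ((b : ℝ) * Real.pi / ((N : ℝ) + K)) := by
  have hm : (0:ℝ) < (N : ℝ) + K := by exact_mod_cast hNK
  have ha : (a : ℝ) = ((N : ℝ) + K) - b := by
    have := congrArg (Int.cast : ℤ → ℝ) h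
    push_cast at this
    linarith
  rw [ha]
  have : (((N : ℝ) + K) - b) * Real.pi / ((N : ℝ) + K)
      = Real.pi - (b : ℝ) * Real.pi / ((N : ℝ) + K) := by
    field_simp
  rw [this, Real.sin_pi_sub]

lemma eq_sin_aux (m : ℝ) (a b : ℤ) (h : a = b) :
    2 * Real.sin ((a : ℝ) * Real.pi / m) = 2 * Real.sin ((b : ℝ) * Real.pi / m) := by
  rw [h]

lemma phiP_lt (N : ℕ) (hN : 2 ≤ N) (p : Fin N × Fin N) (hlt : (p.1 : ℕ) < (p.2 : ℕ)) :
    ((phiP N hN p).1 : ℕ) < ((phiP N hN p).2 : ℕ) := by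
  have h2 := p.2.isLt
  simp only [phiP]
  split_ifs <;> simp <;> omega

lemma psiP_lt (N : ℕ) (hN : 2 ≤ N) (q : Fin N × Fin N) (hlt : (q.1 : ℕ) < (q.2 : ℕ)) :
    ((psiP N hN q).1 : ℕ) < ((psiP N hN q).2 : ℕ) := by
  have h2 := q.2.isLt
  simp only [psiP]
  split_ifs <;> simp <;> omega

lemma psiP_phiP (N : ℕ) (hN : 2 ≤ N) (p : Fin N × Fin N) (hlt : (p.1 : ℕ) < (p.2 : ℕ)) :
    psiP N hN (phiP N hN p) = p := by
  have h1 := p.1.isLt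
  have h2 := p.2.isLt
  simp only [phiP, psiP, apply_ite Prod.fst, apply_ite Prod.snd, apply_ite Fin.val]
  split_ifs with ha hb hb <;>
    (refine Prod.ext (Fin.ext ?_) (Fin.ext ?_)) <;> simp_all <;> omega

lemma phiP_psiP (N : ℕ) (hN : 2 ≤ N) (q : Fin N × Fin N) (hlt : (q.1 : ℕ) < (q.2 : ℕ)) :
    phiP N hN (psiP N hN q) = q := by
  have h1 := q.1.isLt
  have h2 := q.2.isLt
  simp only [phiP, psiP, apply_ite Prod.fst, apply_ite Prod.snd, apply_ite Fin.val]
  split_ifs with ha hb hb <;>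
    (refine Prod.ext (Fin.ext ?_) (Fin.ext ?_)) <;> simp_all <;> omega

lemma factor_eq (N K : ℕ) (hN : 2 ≤ N) (hK : 2 ≤ K) (l : Fin N → ℤ)
    (h0 : l ⟨N - 1, by omega⟩ = 0) (p : Fin N × Fin N) (hlt : (p.1 : ℕ) < (p.2 : ℕ)) :
    2 * Real.sin
        (((sigmaMap N K hN l p.1 - (p.1 : ℕ) - sigmaMap N K hN l p.2 + (p.2 : ℕ) : ℤ) : ℝ)
          * Real.pi / ((N : ℝ) + K))
    = 2 * Real.sin
        (((l (phiP N hN p).1 - ((phiP N hN p).1 : ℕ) - l (phiP N hN p).2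
            + ((phiP N hN p).2 : ℕ) : ℤ) : ℝ) * Real.pi / ((N : ℝ) + K)) := by
  have h1 := p.1.isLt
  have h2 := p.2.isLt
  have hNK : 0 < N + K := by omega
  simp only [phiP]
  by_cases h : (p.1 : ℕ) = 0
  · simp only [if_pos h]
    have hσ1 : sigmaMap N K hN l p.1 = (K : ℤ) - l ⟨N - 2, by omega⟩ := by
      have hc : ¬(p.1 : ℕ) = N - 1 := by omega
      simp only [sigmaMap, if_neg hc, if_pos h]
    by_cases h' : (p.2 : ℕ) = N - 1
    · have hσ2 : sigmaMap N K hN l p.2 = 0 := by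
        simp only [sigmaMap]; rw [if_pos h']
      have hidx : (⟨(p.2 : ℕ) - 1, by omega⟩ : Fin N) = ⟨N - 2, by omega⟩ :=
        Fin.ext (by simp; omega)
      simp only [hσ1, hσ2, hidx, h0]
      apply refl_sin_aux N K hNK
      push_cast
      omega
    · have hσ2 : sigmaMap N K hN l p.2 =
          l ⟨(p.2 : ℕ) - 1, by omega⟩ - l ⟨N - 2, by omega⟩ := by
        have hc : ¬(p.2 : ℕ) = 0 := by omega
        simp only [sigmaMap, if_neg h', if_neg hc]
      simp only [hσ1, hσ2, h0]
      apply refl_sin_aux N K hNK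
      push_cast
      omega
  · simp only [if_neg h]
    have hσ1 : sigmaMap N K hN l p.1 =
        l ⟨(p.1 : ℕ) - 1, by omega⟩ - l ⟨N - 2, by omega⟩ := by
      have hc : ¬(p.1 : ℕ) = N - 1 := by omega
      simp only [sigmaMap, if_neg hc, if_neg h]
    by_cases h' : (p.2 : ℕ) = N - 1
    · have hσ2 : sigmaMap N K hN l p.2 = 0 := by
        simp only [sigmaMap]; rw [if_pos h']
      have hidx : (⟨(p.2 : ℕ) - 1, by omega⟩ : Fin N) = ⟨N - 2, by omega⟩ :=
        Fin.ext (by simp; omega)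
      simp only [hσ1, hσ2, hidx]
      apply eq_sin_aux
      push_cast
      omega
    · have hσ2 : sigmaMap N K hN l p.2 =
          l ⟨(p.2 : ℕ) - 1, by omega⟩ - l ⟨N - 2, by omega⟩ := by
        have hc : ¬(p.2 : ℕ) = 0 := by omega
        simp only [sigmaMap, if_neg h', if_neg hc]
      simp only [hσ1, hσ2]
      apply eq_sin_aux
      push_cast
      omega

theorem stmt_10 (N K : ℕ) (hN : 2 ≤ N) (hK : 2 ≤ K)
    (l : Fin N → ℤ) (hl : l ∈ GammaNK N K) :
    ∏ p ∈ Finset.univ.filter (fun p : Fin N × Fin N => p.1 < p.2),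
      (2 * Real.sin
        (((sigmaMap N K hN l p.1 - (p.1 : ℕ) - sigmaMap N K hN l p.2 + (p.2 : ℕ) : ℤ) : ℝ)
          * Real.pi / ((N : ℝ) + K)))
    = ∏ p ∈ Finset.univ.filter (fun p : Fin N × Fin N => p.1 < p.2),
      (2 * Real.sin
        (((l p.1 - (p.1 : ℕ) - l p.2 + (p.2 : ℕ) : ℤ) : ℝ) * Real.pi / ((N : ℝ) + K))) := by
  have h0 : l ⟨N - 1, by omega⟩ = 0 := hl.2.2.2 _ rfl
  refine Finset.prod_bij' (fun p _ => phiP N hN p) (fun q _ => psiP N hN q)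
    (fun p hp => ?_) (fun q hq => ?_) (fun p hp => ?_) (fun q hq => ?_) (fun p hp => ?_)
  · simp only [Finset.mem_filter, Finset.mem_univ, true_and] at hp ⊢
    exact phiP_lt N hN p hp
  · simp only [Finset.mem_filter, Finset.mem_univ, true_and] at hq ⊢
    exact psiP_lt N hN q hq
  · simp only [Finset.mem_filter, Finset.mem_univ, true_and] at hp
    exact psiP_phiP N hN p hp
  · simp only [Finset.mem_filter, Finset.mem_univ, true_and] at hq
    exact phiP_psiP N hN q hq
  · simp only [Finset.mem_filter, Finset.mem_univ, true_and] at hp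
    exact factor_eq N K hN hK l h0 p hp
end
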